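/- Let X ~ Poisson(m₁ p) and Y ~ Poisson(m₂ q) be independent and Z = ((m₂X - m₁Y)² - (m₂²X + m₁²Y))/(X + Y) (with Z = 0 when X + Y = 0). If p = q, then Var[Z] ≤ 2 m₁² m₂² · Pr[X + Y > 0]. -/

import Mathlib

open scoped BigOperators
open Real

/-- Poisson pmf with rate `lam` at `k`. -/
noncomputable def pp (lam : ℝ) (k : ℕ) : ℝ := Real.exp (-lam) * lam ^ k / (Nat.factorial k)



/-- real falling factorial -/
noncomputable def ff (j : ℕ) (x : ℝ) : ℝ := ∏ i ∈ Finset.range j, (x - i)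

lemma ff_succ (j : ℕ) (x : ℝ) : ff (j+1) x = x * ff j (x - 1) := by
  unfold ff
  rw [Finset.prod_range_succ', mul_comm]
  congr 1
  · norm_num
  · apply Finset.prod_congr rfl
    intro i _
    push_cast
    ring

lemma Smom (j : ℕ) : ∀ (n : ℕ) (a b : ℝ),
    ∑ k ∈ Finset.range (n+1), (n.choose k : ℝ) * a^k * b^(n-k) * ff j (k : ℝ)
      = ff j (n : ℝ) * a^j * (a+b)^(n-j) := by
  induction j with
  | zero =>
      intro n a b
      simp only [ff, Finset.prod_range_zero, mul_one, pow_zero, Nat.sub_zero, one_mul]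
      rw [add_pow]
      exact Finset.sum_congr rfl fun k _ => by ring
  | succ j ih =>
      intro n a b
      have h0' : ff (j+1) ((0:ℕ):ℝ) = 0 := by
        rw [Nat.cast_zero, ff_succ]; ring
      cases n with
      | zero =>
          rw [Finset.sum_range_one, h0']
          norm_num
      | succ m =>
          rw [Finset.sum_range_succ']
          have key : ∀ i ∈ Finset.range (m+1),
              (((m+1).choose (i+1) : ℕ) : ℝ) * a^(i+1) * b^(m+1-(i+1)) * ff (j+1) ((i+1 : ℕ) : ℝ)
                = (((m:ℝ)+1) * a) * ((m.choose i : ℝ) * a^i * b^(m-i) * ff j (i : ℝ)) := by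
            intro i _
            have h2 : (m+1).choose (i+1) * (i+1) = (m+1) * m.choose i :=
              (Nat.add_one_mul_choose_eq m i).symm
            have hc : (((m+1).choose (i+1) : ℕ) : ℝ) * ((i:ℝ)+1) = ((m:ℝ)+1) * (m.choose i : ℝ) := by
              exact_mod_cast congrArg (Nat.cast (R := ℝ)) h2
            have hff : ff (j+1) ((i+1 : ℕ) : ℝ) = ((i:ℝ)+1) * ff j (i : ℝ) := by
              rw [ff_succ]; push_cast; norm_num
            rw [Nat.succ_sub_succ, hff]
            calc (((m+1).choose (i+1) : ℕ) : ℝ) * a^(i+1) * b^(m-i) * (((i:ℝ)+1) * ff j (i : ℝ))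
                = ((((m+1).choose (i+1) : ℕ) : ℝ) * ((i:ℝ)+1)) * (a^(i+1) * b^(m-i) * ff j (i : ℝ)) := by ring
              _ = (((m:ℝ)+1) * (m.choose i : ℝ)) * (a^(i+1) * b^(m-i) * ff j (i : ℝ)) := by rw [hc]
              _ = (((m:ℝ)+1) * a) * ((m.choose i : ℝ) * a^i * b^(m-i) * ff j (i : ℝ)) := by ring
          have hffn : ff (j+1) ((m+1 : ℕ):ℝ) = ((m:ℝ)+1) * ff j (m : ℝ) := by
            rw [ff_succ]; push_cast; norm_num
          rw [Finset.sum_congr rfl key, ← Finset.mul_sum, ih m a b, Nat.succ_sub_succ, h0', hffn]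
          simp only [Nat.choose_zero_right, Nat.cast_one, pow_zero]
          ring



lemma decomp (m₁ m₂ ν x : ℝ) :
    ((m₂*x - m₁*(ν - x))^2 - (m₂^2*x + m₁^2*(ν - x)))^2
      = (m₁+m₂)^4 * ff 4 x
      + (4*m₂^4 + 20*m₁*m₂^3 + 36*m₁^2*m₂^2 + 28*m₁^3*m₂ + 8*m₁^4
         - 4*ν*m₁*m₂^3 - 12*ν*m₁^2*m₂^2 - 12*ν*m₁^3*m₂ - 4*ν*m₁^4) * ff 3 x
      + (2*m₂^4 + 16*m₁*m₂^3 + 40*m₁^2*m₂^2 + 40*m₁^3*m₂ + 14*m₁^4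
         - 8*ν*m₁*m₂^3 - 34*ν*m₁^2*m₂^2 - 44*ν*m₁^3*m₂ - 18*ν*m₁^4
         + 6*ν^2*m₁^2*m₂^2 + 12*ν^2*m₁^3*m₂ + 6*ν^2*m₁^4) * ff 2 x
      + (4*m₁^2*m₂^2 + 8*m₁^3*m₂ + 4*m₁^4
         - 8*ν*m₁^2*m₂^2 - 20*ν*m₁^3*m₂ - 12*ν*m₁^4
         + 4*ν^2*m₁^2*m₂^2 + 16*ν^2*m₁^3*m₂ + 12*ν^2*m₁^4
         - 4*ν^3*m₁^3*m₂ - 4*ν^3*m₁^4) * ff 1 x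
      + m₁^4*ν^2*(ν-1)^2 * ff 0 x := by
  simp only [ff, Finset.prod_range_succ, Finset.prod_range_zero, one_mul]
  push_cast
  ring

lemma KI (m₁ m₂ p : ℝ) (n : ℕ) :
    ∑ k ∈ Finset.range (n+1), (n.choose k : ℝ) * (m₁*p)^k * (m₂*p)^(n-k) *
      ((m₂*(k:ℝ) - m₁*((n:ℝ)-(k:ℝ)))^2 - (m₂^2*(k:ℝ) + m₁^2*((n:ℝ)-(k:ℝ))))^2
    = 2*m₁^2*m₂^2 * (n:ℝ) * ((n:ℝ)-1) * ((m₁+m₂)*p)^n := by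
  have e1 : ∀ k ∈ Finset.range (n+1),
      (n.choose k : ℝ) * (m₁*p)^k * (m₂*p)^(n-k) *
        ((m₂*(k:ℝ) - m₁*((n:ℝ)-(k:ℝ)))^2 - (m₂^2*(k:ℝ) + m₁^2*((n:ℝ)-(k:ℝ))))^2
      = ((m₁+m₂)^4) * ((n.choose k : ℝ) * (m₁*p)^k * (m₂*p)^(n-k) * ff 4 (k:ℝ))
      + (4*m₂^4 + 20*m₁*m₂^3 + 36*m₁^2*m₂^2 + 28*m₁^3*m₂ + 8*m₁^4
         - 4*(n:ℝ)*m₁*m₂^3 - 12*(n:ℝ)*m₁^2*m₂^2 - 12*(n:ℝ)*m₁^3*m₂ - 4*(n:ℝ)*m₁^4)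
          * ((n.choose k : ℝ) * (m₁*p)^k * (m₂*p)^(n-k) * ff 3 (k:ℝ))
      + (2*m₂^4 + 16*m₁*m₂^3 + 40*m₁^2*m₂^2 + 40*m₁^3*m₂ + 14*m₁^4
         - 8*(n:ℝ)*m₁*m₂^3 - 34*(n:ℝ)*m₁^2*m₂^2 - 44*(n:ℝ)*m₁^3*m₂ - 18*(n:ℝ)*m₁^4
         + 6*(n:ℝ)^2*m₁^2*m₂^2 + 12*(n:ℝ)^2*m₁^3*m₂ + 6*(n:ℝ)^2*m₁^4)
          * ((n.choose k : ℝ) * (m₁*p)^k * (m₂*p)^(n-k) * ff 2 (k:ℝ))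
      + (4*m₁^2*m₂^2 + 8*m₁^3*m₂ + 4*m₁^4
         - 8*(n:ℝ)*m₁^2*m₂^2 - 20*(n:ℝ)*m₁^3*m₂ - 12*(n:ℝ)*m₁^4
         + 4*(n:ℝ)^2*m₁^2*m₂^2 + 16*(n:ℝ)^2*m₁^3*m₂ + 12*(n:ℝ)^2*m₁^4
         - 4*(n:ℝ)^3*m₁^3*m₂ - 4*(n:ℝ)^3*m₁^4)
          * ((n.choose k : ℝ) * (m₁*p)^k * (m₂*p)^(n-k) * ff 1 (k:ℝ))
      + (m₁^4*(n:ℝ)^2*((n:ℝ)-1)^2)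
          * ((n.choose k : ℝ) * (m₁*p)^k * (m₂*p)^(n-k) * ff 0 (k:ℝ)) := by
    intro k _
    rw [decomp m₁ m₂ (n:ℝ) (k:ℝ)]
    ring
  rw [Finset.sum_congr rfl e1]
  simp only [Finset.sum_add_distrib, ← Finset.mul_sum]
  rw [Smom 4 n (m₁*p) (m₂*p), Smom 3 n (m₁*p) (m₂*p), Smom 2 n (m₁*p) (m₂*p),
      Smom 1 n (m₁*p) (m₂*p), Smom 0 n (m₁*p) (m₂*p)]
  have hab : m₁*p + m₂*p = (m₁+m₂)*p := by ring
  rw [hab]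
  rcases n with _|_|_|_|m
  · simp only [Nat.reduceAdd, Nat.reduceSub, Nat.zero_sub, Nat.sub_zero, ff,
      Finset.prod_range_succ, Finset.prod_range_zero, one_mul]
    push_cast; ring
  · simp only [Nat.reduceAdd, Nat.reduceSub, Nat.sub_zero, ff,
      Finset.prod_range_succ, Finset.prod_range_zero, one_mul]
    push_cast; ring
  · simp only [Nat.reduceAdd, Nat.reduceSub, Nat.sub_zero, ff,
      Finset.prod_range_succ, Finset.prod_range_zero, one_mul]
    push_cast; ring
  · simp only [Nat.reduceAdd, Nat.reduceSub, Nat.sub_zero, ff,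
      Finset.prod_range_succ, Finset.prod_range_zero, one_mul]
    push_cast; ring
  · have h4 : m+1+1+1+1 - 4 = m := by omega
    have h3 : m+1+1+1+1 - 3 = m+1 := by omega
    have h2 : m+1+1+1+1 - 2 = m+2 := by omega
    have h1 : m+1+1+1+1 - 1 = m+3 := by omega
    have h0 : m+1+1+1+1 - 0 = m+4 := by omega
    rw [h4, h3, h2, h1, h0]
    simp only [ff, Finset.prod_range_succ, Finset.prod_range_zero, one_mul]
    push_cast
    ring



lemma pp_nonneg {lam : ℝ} (h : 0 ≤ lam) (k : ℕ) : 0 ≤ pp lam k :=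
  div_nonneg (mul_nonneg (Real.exp_pos _).le (pow_nonneg h _)) (Nat.cast_nonneg _)

lemma pp_le {lam : ℝ} (h : 0 ≤ lam) (k : ℕ) : pp lam k ≤ lam ^ k / k.factorial := by
  unfold pp
  have h1 : Real.exp (-lam) ≤ 1 := Real.exp_le_one_iff.mpr (neg_nonpos.mpr h)
  have h2 : (0:ℝ) < k.factorial := by exact_mod_cast k.factorial_pos
  calc Real.exp (-lam) * lam ^ k / ↑k.factorial ≤ 1 * lam ^ k / ↑k.factorial := by
        gcongr
    _ = lam ^ k / ↑k.factorial := by rw [one_mul]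

lemma summable_pp {lam : ℝ} : Summable (fun k => pp lam k) := by
  have := (Real.summable_pow_div_factorial lam).mul_left (Real.exp (-lam))
  refine this.congr fun k => ?_
  unfold pp; ring

lemma slices_summable (H : ℕ × ℕ → ℝ) (hH : Summable H) :
    Summable (fun n => ∑ kl ∈ Finset.HasAntidiagonal.antidiagonal n, H kl) := by
  have hH' : Summable (fun x : Σ n : ℕ, (Finset.HasAntidiagonal.antidiagonal n : Finset (ℕ × ℕ)) =>
      H (Finset.HasAntidiagonal.sigmaAntidiagonalEquivProd x)) := (Equiv.summable_iff _).mpr hH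
  refine hH'.sigma.congr fun n => ?_
  simp only [Finset.HasAntidiagonal.sigmaAntidiagonalEquivProd_apply]
  exact Finset.tsum_subtype _ _

lemma slices_eq (H : ℕ × ℕ → ℝ) (hH : Summable H) :
    (∑' k : ℕ, ∑' l : ℕ, H (k, l)) = ∑' n : ℕ, ∑ kl ∈ Finset.HasAntidiagonal.antidiagonal n, H kl := by
  have hH' : Summable (fun x : Σ n : ℕ, (Finset.HasAntidiagonal.antidiagonal n : Finset (ℕ × ℕ)) =>
      H (Finset.HasAntidiagonal.sigmaAntidiagonalEquivProd x)) := (Equiv.summable_iff _).mpr hH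
  rw [← hH.tsum_prod, ← (Finset.HasAntidiagonal.sigmaAntidiagonalEquivProd (A := ℕ)).tsum_eq H,
      hH'.tsum_sigma]
  refine tsum_congr fun n => ?_
  simp only [Finset.HasAntidiagonal.sigmaAntidiagonalEquivProd_apply]
  exact Finset.tsum_subtype _ _

lemma pp_mul_pp (x y : ℝ) {k n : ℕ} (hkn : k ≤ n) :
    pp x k * pp y (n - k) = Real.exp (-(x+y)) * ((n.choose k : ℝ) * x^k * y^(n-k)) / (Nat.factorial n : ℝ) := by
  unfold pp
  have hfact : ((n.choose k : ℕ):ℝ) * ((Nat.factorial k : ℕ):ℝ) * ((Nat.factorial (n-k) : ℕ):ℝ)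
      = ((Nat.factorial n : ℕ):ℝ) := by
    exact_mod_cast congrArg (Nat.cast (R := ℝ)) (Nat.choose_mul_factorial_mul_factorial hkn)
  have h1 : ((Nat.factorial k : ℕ):ℝ) ≠ 0 := by exact_mod_cast k.factorial_ne_zero
  have h2 : ((Nat.factorial (n-k) : ℕ):ℝ) ≠ 0 := by exact_mod_cast (n-k).factorial_ne_zero
  have h3 : ((Nat.factorial n : ℕ):ℝ) ≠ 0 := by exact_mod_cast n.factorial_ne_zero
  have hexp : Real.exp (-(x+y)) = Real.exp (-x) * Real.exp (-y) := by
    rw [← Real.exp_add]; ring_nf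
  rw [hexp]
  field_simp
  rw [← hfact]
  ring


set_option maxHeartbeats 1000000 in
theorem stmt_10 (m₁ m₂ p q : ℝ) (hm₁ : 0 < m₁) (hm₂ : 0 < m₂)
    (hp : 0 ≤ p) (hpq : p = q) :
    (∑' k : ℕ, ∑' l : ℕ, pp (m₁ * p) k * pp (m₂ * q) l *
        (if k + l = 0 then 0 else
          ((m₂ * k - m₁ * l) ^ 2 - (m₂ ^ 2 * k + m₁ ^ 2 * l)) / ((k : ℝ) + l)) ^ 2) -
      (∑' k : ℕ, ∑' l : ℕ, pp (m₁ * p) k * pp (m₂ * q) l *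
        (if k + l = 0 then 0 else
          ((m₂ * k - m₁ * l) ^ 2 - (m₂ ^ 2 * k + m₁ ^ 2 * l)) / ((k : ℝ) + l))) ^ 2 ≤
    2 * m₁ ^ 2 * m₂ ^ 2 *
      (∑' k : ℕ, ∑' l : ℕ, pp (m₁ * p) k * pp (m₂ * q) l *
        (if 0 < k + l then (1 : ℝ) else 0)) := by
  subst hpq
  have ha0 : 0 ≤ m₁ * p := mul_nonneg hm₁.le hp
  have hb0 : 0 ≤ m₂ * p := mul_nonneg hm₂.le hp
  -- pointwise bound on the square of the Z-value
  have hphi : ∀ k l : ℕ,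
      (if k + l = 0 then (0:ℝ) else
        ((m₂ * k - m₁ * l) ^ 2 - (m₂ ^ 2 * k + m₁ ^ 2 * l)) / ((k : ℝ) + l)) ^ 2
      ≤ (m₁ + m₂) ^ 4 * 4 ^ k * 4 ^ l := by
    intro k l
    have hc4 : (0:ℝ) ≤ (m₁ + m₂) ^ 4 * 4 ^ k * 4 ^ l := by positivity
    by_cases h : k + l = 0
    · rw [if_pos h]
      simpa using hc4
    · rw [if_neg h]
      have hk0 : (0:ℝ) ≤ k := Nat.cast_nonneg k
      have hl0 : (0:ℝ) ≤ l := Nat.cast_nonneg l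
      have hs1 : (1:ℝ) ≤ (k:ℝ) + l := by
        have h1 : 1 ≤ k + l := Nat.one_le_iff_ne_zero.mpr h
        have := (Nat.one_le_cast (α := ℝ)).mpr h1
        push_cast at this
        linarith
      have hs0 : (0:ℝ) < (k:ℝ) + l := lt_of_lt_of_le one_pos hs1
      have h1 : (m₂*(k:ℝ) - m₁*l)^2 ≤ ((m₁+m₂)*((k:ℝ)+l))^2 := by
        have e1 : m₂*(k:ℝ) - m₁*l ≤ (m₁+m₂)*((k:ℝ)+l) := by
          nlinarith [mul_nonneg hm₁.le hk0, mul_nonneg hm₁.le hl0,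
            mul_nonneg hm₂.le hl0, mul_nonneg hm₂.le hk0]
        have e2 : -((m₁+m₂)*((k:ℝ)+l)) ≤ m₂*(k:ℝ) - m₁*l := by
          nlinarith [mul_nonneg hm₁.le hk0, mul_nonneg hm₁.le hl0,
            mul_nonneg hm₂.le hl0, mul_nonneg hm₂.le hk0]
        exact sq_le_sq' e2 e1
      have h3 : m₂^2*(k:ℝ) + m₁^2*l ≤ (m₁+m₂)^2*((k:ℝ)+l) := by
        nlinarith [mul_nonneg (mul_nonneg hm₁.le hm₂.le) hk0,
          mul_nonneg (mul_nonneg hm₁.le hm₂.le) hl0,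
          mul_nonneg (mul_nonneg hm₁.le hm₁.le) hl0,
          mul_nonneg (mul_nonneg hm₂.le hm₂.le) hk0]
      have h4 : (0:ℝ) ≤ m₂^2*(k:ℝ) + m₁^2*l := by positivity
      have h5 : (0:ℝ) ≤ ((k:ℝ)+l)^2 - ((k:ℝ)+l) := by nlinarith
      have hN : ((m₂*(k:ℝ) - m₁*l)^2 - (m₂^2*(k:ℝ) + m₁^2*l))^2
          ≤ ((m₁+m₂)^2*((k:ℝ)+l)^2)^2 := by
        apply sq_le_sq'
        · nlinarith [sq_nonneg (m₂*(k:ℝ) - m₁*l),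
            mul_nonneg (sq_nonneg (m₁+m₂)) h5]
        · nlinarith [h1, h4]
      rw [div_pow]
      have step1 : ((m₂*(k:ℝ) - m₁*l)^2 - (m₂^2*(k:ℝ) + m₁^2*l))^2 / ((k:ℝ)+l)^2
          ≤ (m₁+m₂)^4 * ((k:ℝ)+l)^2 := by
        rw [div_le_iff₀ (by positivity)]
        exact hN.trans_eq (by ring)
      refine step1.trans ?_
      have h2p : (k + l) < 2^(k+l) := Nat.lt_two_pow_self
      have hs2 : (k:ℝ) + l ≤ (2:ℝ)^k * (2:ℝ)^l := by
        have hcast : ((k+l : ℕ) : ℝ) ≤ ((2^(k+l) : ℕ) : ℝ) := by exact_mod_cast h2p.le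
        push_cast at hcast
        rwa [pow_add] at hcast
      have h4k : (4:ℝ)^k = ((2:ℝ)^k)^2 := by
        rw [← pow_mul, mul_comm k 2, pow_mul]; norm_num
      have h4l : (4:ℝ)^l = ((2:ℝ)^l)^2 := by
        rw [← pow_mul, mul_comm l 2, pow_mul]; norm_num
      have hs4 : ((k:ℝ)+l)^2 ≤ (4:ℝ)^k * 4^l := by
        calc ((k:ℝ)+l)^2 ≤ ((2:ℝ)^k * 2^l)^2 := by
              apply pow_le_pow_left₀ hs0.le hs2
          _ = 4^k * 4^l := by rw [mul_pow, h4k, h4l]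
      calc (m₁+m₂)^4 * ((k:ℝ)+l)^2 ≤ (m₁+m₂)^4 * ((4:ℝ)^k * 4^l) := by
            apply mul_le_mul_of_nonneg_left hs4 (by positivity)
        _ = (m₁+m₂)^4 * 4^k * 4^l := by ring
  -- summability of F
  have hF0 : ∀ kl : ℕ × ℕ, 0 ≤ (fun kl : ℕ × ℕ => pp (m₁ * p) kl.1 * pp (m₂ * p) kl.2 *
      (if kl.1 + kl.2 = 0 then (0:ℝ) else
        ((m₂ * kl.1 - m₁ * kl.2) ^ 2 - (m₂ ^ 2 * kl.1 + m₁ ^ 2 * kl.2)) / ((kl.1 : ℝ) + kl.2)) ^ 2) kl := fun kl =>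
    mul_nonneg (mul_nonneg (pp_nonneg ha0 _) (pp_nonneg hb0 _)) (sq_nonneg _)
  have hu := Real.summable_pow_div_factorial (4*(m₁*p))
  have hv := Real.summable_pow_div_factorial (4*(m₂*p))
  have huv : Summable (fun kl : ℕ × ℕ =>
      (4*(m₁*p))^kl.1 / (Nat.factorial kl.1) * ((4*(m₂*p))^kl.2 / (Nat.factorial kl.2))) :=
    hu.mul_of_nonneg hv
      (fun k => div_nonneg (pow_nonneg (by linarith) _) (Nat.cast_nonneg _))
      (fun l => div_nonneg (pow_nonneg (by linarith) _) (Nat.cast_nonneg _))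
  have hFsum : Summable (fun kl : ℕ × ℕ => pp (m₁ * p) kl.1 * pp (m₂ * p) kl.2 *
      (if kl.1 + kl.2 = 0 then (0:ℝ) else
        ((m₂ * kl.1 - m₁ * kl.2) ^ 2 - (m₂ ^ 2 * kl.1 + m₁ ^ 2 * kl.2)) / ((kl.1 : ℝ) + kl.2)) ^ 2) := by
    apply Summable.of_nonneg_of_le hF0 ?_ (huv.mul_left ((m₁+m₂)^4))
    rintro ⟨k, l⟩
    calc pp (m₁*p) k * pp (m₂*p) l *
        (if k + l = 0 then (0:ℝ) else
          ((m₂ * k - m₁ * l) ^ 2 - (m₂ ^ 2 * k + m₁ ^ 2 * l)) / ((k : ℝ) + l)) ^ 2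
        ≤ ((m₁*p)^k / Nat.factorial k) * ((m₂*p)^l / Nat.factorial l) *
            ((m₁+m₂)^4 * 4^k * 4^l) := by
          apply mul_le_mul
          · exact mul_le_mul (pp_le ha0 k) (pp_le hb0 l) (pp_nonneg hb0 l)
              (div_nonneg (pow_nonneg ha0 k) (Nat.cast_nonneg _))
          · exact hphi k l
          · exact sq_nonneg _
          · apply mul_nonneg (div_nonneg (pow_nonneg ha0 k) (Nat.cast_nonneg _))
              (div_nonneg (pow_nonneg hb0 l) (Nat.cast_nonneg _))
      _ = (m₁+m₂)^4 * ((4*(m₁*p))^k / (Nat.factorial k) * ((4*(m₂*p))^l / (Nat.factorial l))) := by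
          rw [mul_pow 4 (m₁*p), mul_pow 4 (m₂*p)]
          ring
  -- summability of G
  have hG0 : ∀ kl : ℕ × ℕ, 0 ≤ (fun kl : ℕ × ℕ => pp (m₁ * p) kl.1 * pp (m₂ * p) kl.2 *
      (if 0 < kl.1 + kl.2 then (1:ℝ) else 0)) kl := by
    rintro ⟨k, l⟩
    apply mul_nonneg (mul_nonneg (pp_nonneg ha0 _) (pp_nonneg hb0 _))
    split <;> norm_num
  have hppab : Summable (fun kl : ℕ × ℕ => pp (m₁*p) kl.1 * pp (m₂*p) kl.2) :=
    summable_pp.mul_of_nonneg summable_pp (fun k => pp_nonneg ha0 k) (fun l => pp_nonneg hb0 l)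
  have hGsum : Summable (fun kl : ℕ × ℕ => pp (m₁ * p) kl.1 * pp (m₂ * p) kl.2 *
      (if 0 < kl.1 + kl.2 then (1:ℝ) else 0)) := by
    apply Summable.of_nonneg_of_le hG0 ?_ hppab
    rintro ⟨k, l⟩
    have hnn : 0 ≤ pp (m₁*p) k * pp (m₂*p) l :=
      mul_nonneg (pp_nonneg ha0 _) (pp_nonneg hb0 _)
    split
    · simp
    · simpa using hnn
  -- per-slice bound
  have hslice : ∀ n : ℕ,
      (∑ kl ∈ Finset.HasAntidiagonal.antidiagonal n, (fun kl : ℕ × ℕ => pp (m₁ * p) kl.1 * pp (m₂ * p) kl.2 *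
      (if kl.1 + kl.2 = 0 then (0:ℝ) else
        ((m₂ * kl.1 - m₁ * kl.2) ^ 2 - (m₂ ^ 2 * kl.1 + m₁ ^ 2 * kl.2)) / ((kl.1 : ℝ) + kl.2)) ^ 2) kl)
        ≤ 2 * m₁ ^ 2 * m₂ ^ 2 * ∑ kl ∈ Finset.HasAntidiagonal.antidiagonal n, (fun kl : ℕ × ℕ => pp (m₁ * p) kl.1 * pp (m₂ * p) kl.2 *
      (if 0 < kl.1 + kl.2 then (1:ℝ) else 0)) kl := by
    intro n
    cases n with
    | zero =>
        simp [Finset.Nat.antidiagonal_zero]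
    | succ m =>
        set n := m + 1 with hn
        have hn0 : (0:ℝ) < (n:ℝ) := by positivity
        have hnne : (n:ℝ) ≠ 0 := hn0.ne'
        have hnf : ((Nat.factorial n : ℕ):ℝ) ≠ 0 := by
          exact_mod_cast n.factorial_ne_zero
        rw [Finset.Nat.sum_antidiagonal_eq_sum_range_succ_mk,
            Finset.Nat.sum_antidiagonal_eq_sum_range_succ_mk]
        have eF : ∀ k ∈ Finset.range (n+1),
            (fun kl : ℕ × ℕ => pp (m₁ * p) kl.1 * pp (m₂ * p) kl.2 *
      (if kl.1 + kl.2 = 0 then (0:ℝ) else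
        ((m₂ * kl.1 - m₁ * kl.2) ^ 2 - (m₂ ^ 2 * kl.1 + m₁ ^ 2 * kl.2)) / ((kl.1 : ℝ) + kl.2)) ^ 2) (k, n - k)
            = Real.exp (-(m₁*p + m₂*p)) / ((Nat.factorial n : ℝ) * (n:ℝ)^2) *
              ((n.choose k : ℝ) * (m₁*p)^k * (m₂*p)^(n-k) *
                ((m₂*(k:ℝ) - m₁*((n:ℝ)-(k:ℝ)))^2 - (m₂^2*(k:ℝ) + m₁^2*((n:ℝ)-(k:ℝ))))^2) := by
          intro k hk
          have hkn : k ≤ n := Nat.lt_succ_iff.mp (Finset.mem_range.mp hk)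
          have hne : ¬ (k + (n - k) = 0) := by omega
          simp only [if_neg hne]
          have hcast : ((n - k : ℕ) : ℝ) = (n:ℝ) - k := Nat.cast_sub hkn
          rw [hcast]
          have hden : (k:ℝ) + ((n:ℝ) - k) = (n:ℝ) := by ring
          rw [hden, pp_mul_pp (m₁*p) (m₂*p) hkn, div_pow]
          field_simp
        have eG : ∀ k ∈ Finset.range (n+1),
            (fun kl : ℕ × ℕ => pp (m₁ * p) kl.1 * pp (m₂ * p) kl.2 *
      (if 0 < kl.1 + kl.2 then (1:ℝ) else 0)) (k, n - k)
            = Real.exp (-(m₁*p + m₂*p)) / (Nat.factorial n : ℝ) *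
              ((n.choose k : ℝ) * (m₁*p)^k * (m₂*p)^(n-k) * ff 0 (k:ℝ)) := by
          intro k hk
          have hkn : k ≤ n := Nat.lt_succ_iff.mp (Finset.mem_range.mp hk)
          have hpos : 0 < k + (n - k) := by omega
          simp only [if_pos hpos]
          rw [pp_mul_pp (m₁*p) (m₂*p) hkn]
          simp only [ff, Finset.prod_range_zero]
          ring
        rw [Finset.sum_congr rfl eF, Finset.sum_congr rfl eG,
            ← Finset.mul_sum, ← Finset.mul_sum, KI m₁ m₂ p n, Smom 0 n (m₁*p) (m₂*p)]
        have hab : m₁*p + m₂*p = (m₁+m₂)*p := by ring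
        rw [hab]
        have hff0 : ff 0 ((n:ℕ):ℝ) = 1 := by simp [ff]
        rw [hff0]
        have ht0 : (0:ℝ) ≤ ((m₁+m₂)*p)^n := by positivity
        have hE : (0:ℝ) < Real.exp (-((m₁+m₂)*p)) := Real.exp_pos _
        have hfp : (0:ℝ) < (Nat.factorial n : ℝ) := by exact_mod_cast n.factorial_pos
        have hC0 : (0:ℝ) ≤ Real.exp (-((m₁+m₂)*p)) * (2*m₁^2*m₂^2) * ((m₁+m₂)*p)^n /
            ((Nat.factorial n : ℝ) * (n:ℝ)^2) := by positivity
        have hL : Real.exp (-((m₁+m₂)*p)) / ((Nat.factorial n : ℝ) * (n:ℝ)^2) *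
              (2*m₁^2*m₂^2 * (n:ℝ) * ((n:ℝ)-1) * ((m₁+m₂)*p)^n)
            = (Real.exp (-((m₁+m₂)*p)) * (2*m₁^2*m₂^2) * ((m₁+m₂)*p)^n /
                ((Nat.factorial n : ℝ) * (n:ℝ)^2)) * ((n:ℝ) * ((n:ℝ)-1)) := by
          ring
        have hR : 2 * m₁ ^ 2 * m₂ ^ 2 *
              (Real.exp (-((m₁+m₂)*p)) / (Nat.factorial n : ℝ) *
                (1 * (m₁*p)^0 * ((m₁+m₂)*p)^(n-0)))
            = (Real.exp (-((m₁+m₂)*p)) * (2*m₁^2*m₂^2) * ((m₁+m₂)*p)^n /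
                ((Nat.factorial n : ℝ) * (n:ℝ)^2)) * ((n:ℝ)^2) := by
          rw [Nat.sub_zero]
          field_simp
        rw [hL, hR]
        have hmono : (n:ℝ) * ((n:ℝ)-1) ≤ (n:ℝ)^2 := by nlinarith
        exact mul_le_mul_of_nonneg_left hmono hC0
  -- assemble
  refine le_trans (sub_le_self _ (sq_nonneg _)) ?_
  calc (∑' k : ℕ, ∑' l : ℕ, pp (m₁ * p) k * pp (m₂ * p) l *
        (if k + l = 0 then 0 else
          ((m₂ * k - m₁ * l) ^ 2 - (m₂ ^ 2 * k + m₁ ^ 2 * l)) / ((k : ℝ) + l)) ^ 2)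
      = ∑' n : ℕ, ∑ kl ∈ Finset.HasAntidiagonal.antidiagonal n, (fun kl : ℕ × ℕ => pp (m₁ * p) kl.1 * pp (m₂ * p) kl.2 *
      (if kl.1 + kl.2 = 0 then (0:ℝ) else
        ((m₂ * kl.1 - m₁ * kl.2) ^ 2 - (m₂ ^ 2 * kl.1 + m₁ ^ 2 * kl.2)) / ((kl.1 : ℝ) + kl.2)) ^ 2) kl := slices_eq _ hFsum
    _ ≤ ∑' n : ℕ, 2 * m₁ ^ 2 * m₂ ^ 2 * ∑ kl ∈ Finset.HasAntidiagonal.antidiagonal n, (fun kl : ℕ × ℕ => pp (m₁ * p) kl.1 * pp (m₂ * p) kl.2 *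
      (if 0 < kl.1 + kl.2 then (1:ℝ) else 0)) kl :=
        Summable.tsum_le_tsum hslice (slices_summable _ hFsum) ((slices_summable _ hGsum).mul_left _)
    _ = 2 * m₁ ^ 2 * m₂ ^ 2 * ∑' n : ℕ, ∑ kl ∈ Finset.HasAntidiagonal.antidiagonal n, (fun kl : ℕ × ℕ => pp (m₁ * p) kl.1 * pp (m₂ * p) kl.2 *
      (if 0 < kl.1 + kl.2 then (1:ℝ) else 0)) kl :=
        tsum_mul_left
    _ = 2 * m₁ ^ 2 * m₂ ^ 2 *
        (∑' k : ℕ, ∑' l : ℕ, pp (m₁ * p) k * pp (m₂ * p) l *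
          (if 0 < k + l then (1 : ℝ) else 0)) := by
        congr 1
        exact (slices_eq _ hGsum).symm
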